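/- (Theorem 1, sequential update with Lipschitz gradient.) Let K ⊆ ℝⁿ be a closed convex cone with dual cone K*, let μ > 0, and let ψ : ℝⁿ → ℝ be concave, differentiable, with ∇ψ Lipschitz continuous with constant 1/μ in the Euclidean norm, ψ(0) = 0, and gradient antitone on K: whenever u, v ∈ K and u − v ∈ K, ∇ψ(v) − ∇ψ(u) ∈ K*. For t ∈ {1,…,m} let F_t ⊆ ℝᵏ and A_t : ℝᵏ → ℝⁿ linear with A_t x ∈ K for all x ∈ F_t. Set u₀ = 0 and u_t = ∑_{s=1}^t A_s x̂_s, and suppose x̂_t ∈ F_t satisfies ⟨x̂_t, A_tᵀ ∇ψ(u_{t−1})⟩ ≥ ⟨x, A_tᵀ ∇ψ(u_{t−1})⟩ for all x ∈ F_t. Let ᾱ ∈ ℝ satisfy ⟨∇ψ(u), u⟩ ≥ (ᾱ + 1)·ψ(u) for every u ∈ K. Then for every choice of x'_t ∈ F_t and every w ∈ ℝⁿ: (1 − ᾱ)·ψ(u_m) ≥ ∑_{t=1}^m ⟨A_t x'_t, ∇ψ(u_m)⟩ − ⟨∇ψ(u_m), w⟩ + ψ(w) − (1/(2μ)) ∑_{t=1}^m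 ‖A_t x̂_t‖². (This says P_seq ≥ (1/(1 − ᾱ_ψ))·(D★ − (1/(2μ))∑_t ‖A_t x̂_t‖²).) -/

import Mathlib

open RealInnerProductSpace

/-- The dual cone of a set `K`. -/
def dualCone {n : ℕ} (K : Set (EuclideanSpace ℝ (Fin n))) :
    Set (EuclideanSpace ℝ (Fin n)) :=
  {y | ∀ u ∈ K, 0 ≤ ⟪y, u⟫}

section Helpers

variable {n : ℕ}

private lemma hasDerivAt_comp_line {ψ : EuclideanSpace ℝ (Fin n) → ℝ}
    {g : EuclideanSpace ℝ (Fin n) → EuclideanSpace ℝ (Fin n)}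
    (hg : ∀ u, HasGradientAt ψ (g u) u) (x d : EuclideanSpace ℝ (Fin n)) (t : ℝ) :
    HasDerivAt (fun s : ℝ => ψ (x + s • d)) ⟪g (x + t • d), d⟫ t := by
  have hγ : HasDerivAt (fun s : ℝ => x + s • d) d t := by
    simpa using ((hasDerivAt_id t).smul_const d).const_add x
  have h := (hg (x + t • d)).hasFDerivAt.comp_hasDerivAt t hγ
  simp at h
  exact h

private lemma concave_line {ψ : EuclideanSpace ℝ (Fin n) → ℝ}
    (hψ : ConcaveOn ℝ Set.univ ψ) (x d : EuclideanSpace ℝ (Fin n)) :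
    ConcaveOn ℝ Set.univ (fun t : ℝ => ψ (x + t • d)) := by
  refine ⟨convex_univ, fun s _ r _ a b ha hb hab => ?_⟩
  have h := hψ.2 (Set.mem_univ (x + s • d)) (Set.mem_univ (x + r • d)) ha hb hab
  have hx : (a + b) • x = x := by rw [hab, one_smul]
  have key : x + (a • s + b • r) • d = a • (x + s • d) + b • (x + r • d) := by
    rw [smul_add, smul_add, smul_smul, smul_smul, add_add_add_comm, ← add_smul, hab, one_smul,
      ← add_smul]
    simp [smul_eq_mul]
  rw [← key] at h
  simpa using h

private lemma concave_grad_le {ψ : EuclideanSpace ℝ (Fin n) → ℝ}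
    (hψ : ConcaveOn ℝ Set.univ ψ)
    {g : EuclideanSpace ℝ (Fin n) → EuclideanSpace ℝ (Fin n)}
    (hg : ∀ u, HasGradientAt ψ (g u) u) (x y : EuclideanSpace ℝ (Fin n)) :
    ψ y ≤ ψ x + ⟪g x, y - x⟫ := by
  set d := y - x with hd
  have hder : HasDerivAt (fun s : ℝ => ψ (x + s • d)) ⟪g x, d⟫ 0 := by
    simpa using hasDerivAt_comp_line hg x d 0
  have hslope : Filter.Tendsto (slope (fun s : ℝ => ψ (x + s • d)) 0)
      (nhdsWithin 0 (Set.Ioi 0)) (nhds ⟪g x, d⟫) :=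
    (hasDerivAt_iff_tendsto_slope.mp hder).mono_left
      (nhdsWithin_mono _ (fun z hz => by simpa using ne_of_gt hz))
  have hbound : ∀ᶠ t in nhdsWithin (0:ℝ) (Set.Ioi 0),
      ψ y - ψ x ≤ slope (fun s : ℝ => ψ (x + s • d)) 0 t := by
    filter_upwards [Ioc_mem_nhdsGT_of_mem (Set.left_mem_Ico.mpr one_pos)] with t ht
    have hc := (concave_line hψ x d).2 (Set.mem_univ (0:ℝ)) (Set.mem_univ (1:ℝ))
      (show (0:ℝ) ≤ 1 - t by linarith [ht.2]) ht.1.le (show (1:ℝ) - t + t = 1 by ring)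
    rw [slope_def_field]
    simp only [smul_eq_mul, mul_zero, mul_one, zero_add, zero_smul, add_zero, one_smul] at hc ⊢
    have hxd : x + d = y := by rw [hd]; abel
    rw [hxd] at hc
    rw [sub_zero, le_div_iff₀ ht.1]
    nlinarith [hc]
  have := ge_of_tendsto hslope hbound
  linarith

private lemma descent_lemma {μ : ℝ} (hμ : 0 < μ)
    {ψ : EuclideanSpace ℝ (Fin n) → ℝ}
    {g : EuclideanSpace ℝ (Fin n) → EuclideanSpace ℝ (Fin n)}
    (hg : ∀ u, HasGradientAt ψ (g u) u)
    (hlip : ∀ u u', ‖g u - g u'‖ ≤ (1 / μ) * ‖u - u'‖)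
    (x d : EuclideanSpace ℝ (Fin n)) :
    ψ x + ⟪g x, d⟫ - (1 / (2 * μ)) * ‖d‖ ^ 2 ≤ ψ (x + d) := by
  have hgcont : Continuous g := by
    have hlw : LipschitzWith (Real.toNNReal (1/μ)) g :=
      LipschitzWith.of_dist_le_mul fun a b => by
        have h := hlip a b
        rw [dist_eq_norm, dist_eq_norm]
        have he : ((Real.toNNReal (1/μ) : NNReal) : ℝ) = 1/μ :=
          Real.coe_toNNReal _ (le_of_lt (by positivity))
        rw [he]; exact h
    exact hlw.continuous
  set G : ℝ → ℝ := fun t => ⟪g (x + t • d), d⟫ with hGdef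
  have hGcont : Continuous G := by
    apply Continuous.inner
    · exact hgcont.comp (by continuity)
    · exact continuous_const
  have hLcont : Continuous (fun t : ℝ => ⟪g x, d⟫ - (1/μ) * ‖d‖^2 * t) := by continuity
  have hftc : ∫ t in (0:ℝ)..1, G t = ψ (x + d) - ψ x := by
    have := intervalIntegral.integral_eq_sub_of_hasDerivAt
      (f := fun s : ℝ => ψ (x + s • d)) (f' := G)
      (fun t _ => hasDerivAt_comp_line hg x d t)
      (hGcont.intervalIntegrable 0 1)
    simpa using this
  have hlower : ∀ t ∈ Set.Icc (0:ℝ) 1, ⟪g x, d⟫ - (1/μ) * ‖d‖^2 * t ≤ G t := by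
    intro t ht
    have h1 : ‖g (x + t • d) - g x‖ ≤ (1/μ) * (t * ‖d‖) := by
      have h := hlip (x + t • d) x
      simpa [norm_smul, abs_of_nonneg ht.1] using h
    have h2 : |⟪g (x + t • d) - g x, d⟫| ≤ ‖g (x + t • d) - g x‖ * ‖d‖ :=
      abs_real_inner_le_norm _ _
    have h3 : G t = ⟪g x, d⟫ + ⟪g (x + t • d) - g x, d⟫ := by
      simp [hGdef, inner_sub_left]
    have h4 := neg_abs_le ⟪g (x + t • d) - g x, d⟫
    have h5 : ‖g (x + t • d) - g x‖ * ‖d‖ ≤ (1/μ) * (t * ‖d‖) * ‖d‖ :=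
      mul_le_mul_of_nonneg_right h1 (norm_nonneg d)
    have hsq : ‖d‖^2 = ‖d‖ * ‖d‖ := sq ‖d‖
    rw [h3, hsq]
    nlinarith
  have hmono := intervalIntegral.integral_mono_on (μ := MeasureTheory.volume)
      zero_le_one (hLcont.intervalIntegrable 0 1) (hGcont.intervalIntegrable 0 1) hlower
  have hL : ∫ t in (0:ℝ)..1, (⟪g x, d⟫ - (1/μ) * ‖d‖^2 * t)
      = ⟪g x, d⟫ - (1/(2*μ)) * ‖d‖^2 := by
    have hint2 : IntervalIntegrable (fun t : ℝ => (1/μ) * ‖d‖^2 * t) MeasureTheory.volume 0 1 :=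
      (by continuity : Continuous fun t : ℝ => (1/μ) * ‖d‖^2 * t).intervalIntegrable 0 1
    rw [intervalIntegral.integral_sub intervalIntegrable_const hint2,
      intervalIntegral.integral_const_mul, integral_id]
    simp only [intervalIntegral.integral_const, smul_eq_mul]
    ring
  rw [hL, hftc] at hmono
  linarith

end Helpers

/-- Theorem 1, sequential update, for differentiable `ψ` with
`(1/μ)`-Lipschitz and antitone (on `K`) gradient `g`. -/
theorem stmt_5 {n k m : ℕ}
    (K : Set (EuclideanSpace ℝ (Fin n)))
    (hKclosed : IsClosed K) (hKconvex : Convex ℝ K)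
    (hKcone : ∀ c : ℝ, 0 < c → ∀ u ∈ K, c • u ∈ K)
    (μ : ℝ) (hμ : 0 < μ)
    (ψ : EuclideanSpace ℝ (Fin n) → ℝ)
    (hψ : ConcaveOn ℝ Set.univ ψ) (hψ0 : ψ 0 = 0)
    (g : EuclideanSpace ℝ (Fin n) → EuclideanSpace ℝ (Fin n))
    (hg : ∀ u, HasGradientAt ψ (g u) u)
    (hlip : ∀ u u', ‖g u - g u'‖ ≤ (1 / μ) * ‖u - u'‖)
    (hantitone : ∀ u ∈ K, ∀ v ∈ K, u - v ∈ K → g v - g u ∈ dualCone K)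
    (F : ℕ → Set (EuclideanSpace ℝ (Fin k)))
    (A : ℕ → EuclideanSpace ℝ (Fin k) →ₗ[ℝ] EuclideanSpace ℝ (Fin n))
    (hA : ∀ t < m, ∀ x ∈ F t, A t x ∈ K)
    (xt : ℕ → EuclideanSpace ℝ (Fin k))
    (hxt : ∀ t < m, xt t ∈ F t)
    (u : ℕ → EuclideanSpace ℝ (Fin n))
    (hu : ∀ t, u t = ∑ s ∈ Finset.range t, A s (xt s))
    (hmax : ∀ t < m, ∀ x ∈ F t, ⟪A t x, g (u t)⟫ ≤ ⟪A t (xt t), g (u t)⟫)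
    (α : ℝ)
    (hα : ∀ v ∈ K, (α + 1) * ψ v ≤ ⟪g v, v⟫)
    (x' : ℕ → EuclideanSpace ℝ (Fin k))
    (hx' : ∀ t < m, x' t ∈ F t)
    (w : EuclideanSpace ℝ (Fin n)) :
    (∑ t ∈ Finset.range m, ⟪A t (x' t), g (u m)⟫) - ⟪g (u m), w⟫ + ψ w -
        (1 / (2 * μ)) * ∑ t ∈ Finset.range m, ‖A t (xt t)‖ ^ 2 ≤
      (1 - α) * ψ (u m) := by
  rcases Nat.eq_zero_or_pos m with hm | hm0
  · subst hm
    have hB := concave_grad_le hψ hg 0 w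
    have hu0 : u 0 = 0 := by simp [hu]
    simp only [Finset.range_zero, Finset.sum_empty, hu0, hψ0, sub_zero, mul_zero]
    rw [hψ0, sub_zero] at hB
    linarith
  -- m ≥ 1
  have hadd : ∀ a b : EuclideanSpace ℝ (Fin n), a ∈ K → b ∈ K → a + b ∈ K := by
    intro a b ha hb
    have h2 : (1/2 : ℝ) • a + (1/2 : ℝ) • b ∈ K :=
      hKconvex ha hb (by norm_num) (by norm_num) (by norm_num)
    have h3 := hKcone 2 (by norm_num) _ h2
    simpa [smul_add, smul_smul, show (2:ℝ) * (1/2) = 1 by norm_num] using h3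
  have h0K : (0 : EuclideanSpace ℝ (Fin n)) ∈ K := by
    have hv : A 0 (x' 0) ∈ K := hA 0 hm0 _ (hx' 0 hm0)
    have htend : Filter.Tendsto (fun i : ℕ => (1/(i+1:ℝ)) • A 0 (x' 0))
        Filter.atTop (nhds 0) := by
      simpa using (tendsto_one_div_add_atTop_nhds_zero_nat (𝕜 := ℝ)).smul_const (A 0 (x' 0))
    exact hKclosed.mem_of_tendsto htend
      (Filter.Eventually.of_forall fun i => hKcone _ (by positivity) _ hv)
  have hsumK : ∀ (S : Finset ℕ) (f : ℕ → EuclideanSpace ℝ (Fin n)),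
      (∀ s ∈ S, f s ∈ K) → ∑ s ∈ S, f s ∈ K := by
    intro S f hf
    exact Finset.sum_induction f (· ∈ K) hadd h0K hf
  have huK : ∀ t, t ≤ m → u t ∈ K := by
    intro t htm
    rw [hu]
    exact hsumK _ _ (fun s hs => hA s (lt_of_lt_of_le (Finset.mem_range.mp hs) htm) _
      (hxt s (lt_of_lt_of_le (Finset.mem_range.mp hs) htm)))
  have hdiffK : ∀ t, t ≤ m → u m - u t ∈ K := by
    intro t htm
    have heq : u m - u t = ∑ s ∈ Finset.Ico t m, A s (xt s) := by
      rw [hu, hu, Finset.sum_Ico_eq_sub _ htm]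
    rw [heq]
    exact hsumK _ _ (fun s hs => hA s (Finset.mem_Ico.mp hs).2 _
      (hxt s (Finset.mem_Ico.mp hs).2))
  have hstep : ∀ t, t < m →
      ψ (u t) + ⟪A t (x' t), g (u m)⟫ - (1/(2*μ)) * ‖A t (xt t)‖^2 ≤ ψ (u (t+1)) := by
    intro t htm
    have hsucc : u (t+1) = u t + A t (xt t) := by
      rw [hu, hu, Finset.sum_range_succ]
    have hdes := descent_lemma hμ hg hlip (u t) (A t (xt t))
    rw [← hsucc] at hdes
    have hgmax : ⟪A t (x' t), g (u t)⟫ ≤ ⟪A t (xt t), g (u t)⟫ := hmax t htm _ (hx' t htm)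
    have hanti : (0:ℝ) ≤ ⟪g (u t) - g (u m), A t (x' t)⟫ :=
      hantitone (u m) (huK m le_rfl) (u t) (huK t htm.le) (hdiffK t htm.le) _
        (hA t htm _ (hx' t htm))
    have e1 : ⟪A t (xt t), g (u t)⟫ = ⟪g (u t), A t (xt t)⟫ := real_inner_comm _ _
    have e2 : ⟪g (u t) - g (u m), A t (x' t)⟫
        = ⟪A t (x' t), g (u t)⟫ - ⟪A t (x' t), g (u m)⟫ := by
      rw [inner_sub_left, real_inner_comm (g (u t)), real_inner_comm (g (u m))]
    rw [e2] at hanti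
    rw [e1] at hgmax
    linarith
  have htel : ∀ j, j ≤ m →
      ∑ t ∈ Finset.range j, (⟪A t (x' t), g (u m)⟫ - (1/(2*μ)) * ‖A t (xt t)‖^2)
        ≤ ψ (u j) := by
    intro j
    induction j with
    | zero => intro _; simp [hu, hψ0]
    | succ j ih =>
      intro hjm
      rw [Finset.sum_range_succ]
      have h1 := ih (Nat.le_of_succ_le hjm)
      have h2 := hstep j (Nat.lt_of_succ_le hjm)
      linarith
  have htelm := htel m le_rfl
  have hsplit : (∑ t ∈ Finset.range m, ⟪A t (x' t), g (u m)⟫)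
      - (1/(2*μ)) * ∑ t ∈ Finset.range m, ‖A t (xt t)‖^2
      = ∑ t ∈ Finset.range m, (⟪A t (x' t), g (u m)⟫ - (1/(2*μ)) * ‖A t (xt t)‖^2) := by
    rw [Finset.sum_sub_distrib, Finset.mul_sum]
  have hBw := concave_grad_le hψ hg (u m) w
  have hαm := hα (u m) (huK m le_rfl)
  have hir : ⟪g (u m), w - u m⟫ = ⟪g (u m), w⟫ - ⟪g (u m), u m⟫ := inner_sub_right _ _ _
  rw [hir] at hBw
  linarith [hsplit, htelm]
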